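/- (Theorem 6(1), attainment of the merit minimum for QPs.) In the QP setting, for every t ∈ ℝ the infimum of (x,s) ↦ r(x,s,t) over ℝ^n × ℝ^m is attained: there exists (x̄,s̄) with r(x̄,s̄,t) ≤ r(x,s,t) for all (x,s). -/

import Mathlib

open Filter Metric Finset Topology
open scoped RealInnerProductSpace

open scoped RealInnerProductSpace

lemma exists_min_norm {F : Type*} [NormedAddCommGroup F] [NormedSpace ℝ F]
    [FiniteDimensional ℝ F] {S : Set F} (hS : IsClosed S) (hne : S.Nonempty) :
    ∃ x ∈ S, ∀ y ∈ S, ‖x‖ ≤ ‖y‖ := by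
  obtain ⟨x₀, hx₀⟩ := hne
  have hK : IsCompact (S ∩ Metric.closedBall 0 ‖x₀‖) :=
    (isCompact_closedBall 0 ‖x₀‖).inter_left hS
  obtain ⟨x, hxK, hxmin⟩ := hK.exists_isMinOn ⟨x₀, hx₀, by simp⟩
    (continuous_norm.continuousOn (s := S ∩ Metric.closedBall 0 ‖x₀‖))
  refine ⟨x, hxK.1, fun y hy => ?_⟩
  by_cases h : ‖y‖ ≤ ‖x₀‖
  · exact hxmin ⟨hy, by simpa [Metric.mem_closedBall, dist_eq_norm] using h⟩
  · exact le_trans (hxmin ⟨hx₀, by simp⟩) (le_of_not_ge h)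

lemma psd_kernel {F : Type*} [NormedAddCommGroup F] [InnerProductSpace ℝ F]
    (Q : F →ₗ[ℝ] F) (hsym : ∀ x y : F, ⟪Q x, y⟫ = ⟪x, Q y⟫)
    (hpsd : ∀ x : F, 0 ≤ ⟪x, Q x⟫) {d : F} (hd : ⟪d, Q d⟫ ≤ 0) : Q d = 0 := by
  have h0 : ⟪d, Q d⟫ = 0 := le_antisymm hd (hpsd d)
  set K := ⟪Q d, Q (Q d)⟫ with hK
  have hKnn : 0 ≤ K := hpsd (Q d)
  set a := ‖Q d‖^2 with ha
  have hann : 0 ≤ a := sq_nonneg _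
  have key : ∀ c : ℝ, 0 ≤ 2 * c * a + c^2 * K := by
    intro c
    have h1 := hpsd (d + c • Q d)
    have expand : ⟪d + c • Q d, Q (d + c • Q d)⟫
        = ⟪d, Q d⟫ + 2 * c * a + c^2 * K := by
      have e1 : ⟪d, Q (Q d)⟫ = a := by rw [← hsym d (Q d), real_inner_self_eq_norm_sq]
      have e2 : ⟪Q d, Q d⟫ = a := real_inner_self_eq_norm_sq _
      rw [map_add, map_smul, inner_add_left, inner_add_right, inner_add_right]
      rw [real_inner_smul_left, real_inner_smul_left, real_inner_smul_right,
        real_inner_smul_right, e1, e2, ← hK]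
      ring
    rw [expand, h0] at h1; linarith
  have hK1 : (0:ℝ) < K + 1 := by linarith
  have h2 := key (-a / (K+1))
  have h3 : 0 ≤ (2 * (-a / (K+1)) * a + (-a / (K+1))^2 * K) * (K+1)^2 :=
    mul_nonneg h2 (by positivity)
  have h4 : (2 * (-a / (K+1)) * a + (-a / (K+1))^2 * K) * (K+1)^2
      = -a^2 * (K + 2) := by field_simp; ring
  rw [h4] at h3
  have hn : a ≤ 0 := by nlinarith
  have : ‖Q d‖ = 0 := by nlinarith [norm_nonneg (Q d)]
  simpa using this


lemma oneDim_lower (v σ : ℝ) :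
    (1/4) * (max v 0)^2 ≤ (1/2)*(v+σ)^2 + (1/2)*(max (-σ) 0)^2 := by
  rcases le_total v 0 with hv | hv
  · rw [max_eq_right hv]
    have h0 : (0:ℝ) ≤ (1/2)*(v+σ)^2 + (1/2)*(max (-σ) 0)^2 := by positivity
    nlinarith
  · rw [max_eq_left hv]
    rcases le_total σ 0 with hσ | hσ
    · rw [max_eq_left (by linarith)]
      nlinarith [sq_nonneg (v + 2*σ)]
    · rw [max_eq_right (by linarith)]
      nlinarith [mul_nonneg hv hσ, sq_nonneg σ]

lemma oneDim_eq (v : ℝ) :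
    (1/2)*(v + (-v + max v 0 / 2))^2 + (1/2)*(max (-(-v + max v 0 / 2)) 0)^2
      = (1/4) * (max v 0)^2 := by
  rcases le_total v 0 with hv | hv
  · rw [max_eq_right hv, max_eq_right (by linarith)]; ring
  · rw [max_eq_left hv, max_eq_left (by linarith)]; ring

lemma norm_sq_euclid {m : ℕ} (y : EuclideanSpace ℝ (Fin m)) :
    ‖y‖^2 = ∑ i, (y i)^2 := by
  rw [EuclideanSpace.norm_eq, Real.sq_sqrt (by positivity)]
  simp [Real.norm_eq_abs, sq_abs]

lemma infDist_orthant {m : ℕ} (s : EuclideanSpace ℝ (Fin m)) :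
    (Metric.infDist s {s' : EuclideanSpace ℝ (Fin m) | ∀ i, 0 ≤ s' i})^2
      = ∑ i, (max (-(s i)) 0)^2 := by
  set C := {s' : EuclideanSpace ℝ (Fin m) | ∀ i, 0 ≤ s' i} with hC
  have hCne : C.Nonempty := ⟨0, fun i => by simp⟩
  set g := Real.sqrt (∑ i, (max (-(s i)) 0)^2) with hg
  have hgnn : 0 ≤ g := Real.sqrt_nonneg _
  set splus : EuclideanSpace ℝ (Fin m) := WithLp.toLp 2 (fun i => max (s i) 0) with hsplus
  have hmem : splus ∈ C := fun i => le_max_right _ _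
  have h1 : Metric.infDist s C ≤ g := by
    refine le_trans (Metric.infDist_le_dist_of_mem hmem) ?_
    rw [dist_eq_norm, hg, EuclideanSpace.norm_eq]
    apply Real.sqrt_le_sqrt
    apply Finset.sum_le_sum
    intro i _
    have : (s - splus) i = s i - max (s i) 0 := rfl
    rw [this, Real.norm_eq_abs, sq_abs]
    rcases le_total (s i) 0 with h | h
    · rw [max_eq_right h, max_eq_left (by linarith)]; ring_nf; exact le_refl _
    · rw [max_eq_left h, max_eq_right (by linarith)]; simp
  have h2 : g ≤ Metric.infDist s C := by
    by_contra hlt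
    push_neg at hlt
    obtain ⟨c, hcC, hcd⟩ := (Metric.infDist_lt_iff hCne).mp hlt
    have : g ≤ dist s c := by
      rw [dist_eq_norm, hg, EuclideanSpace.norm_eq]
      apply Real.sqrt_le_sqrt
      apply Finset.sum_le_sum
      intro i _
      have hci : 0 ≤ c i := hcC i
      have : (s - c) i = s i - c i := rfl
      rw [this, Real.norm_eq_abs, sq_abs]
      rcases le_total (s i) 0 with h | h
      · rw [max_eq_left (by linarith)]; nlinarith
      · rw [max_eq_right (by linarith)]
        simpa using sq_nonneg (s i - c i)
    linarith
  have : Metric.infDist s C = g := le_antisymm h1 h2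
  rw [this, hg, Real.sq_sqrt (by positivity)]

set_option maxHeartbeats 2000000 in
lemma cl_closed (n : ℕ) :
    ∀ (k : ℕ) (Q : EuclideanSpace ℝ (Fin n) →ₗ[ℝ] EuclideanSpace ℝ (Fin n))
      (_ : ∀ x y, ⟪Q x, y⟫ = ⟪x, Q y⟫) (_ : ∀ x, 0 ≤ ⟪x, Q x⟫)
      (π : EuclideanSpace ℝ (Fin n) →ₗ[ℝ] ℝ)
      (ℓ : Fin k → (EuclideanSpace ℝ (Fin n) →ₗ[ℝ] ℝ)),
      IsClosed {z : ℝ × (Fin k → ℝ) |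
        ∃ x, (1/2) * ⟪x, Q x⟫ + π x ≤ z.1 ∧ ∀ i, ℓ i x ≤ z.2 i} := by
  intro k
  induction k using Nat.strong_induction_on with
  | _ k IH =>
  intro Q hsym hpsd π ℓ
  apply IsSeqClosed.isClosed
  intro zs z hmem htend
  set E := EuclideanSpace ℝ (Fin n)
  set qq : E → ℝ := fun x => (1/2) * ⟪x, Q x⟫ + π x with hqq
  have hqc : Continuous qq := by
    have h1 : Continuous fun x : E => ⟪x, Q x⟫ :=
      continuous_id.inner Q.continuous_of_finiteDimensional
    exact (continuous_const.mul h1).add π.continuous_of_finiteDimensional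
  have hSclosed : ∀ j : ℕ, IsClosed {x : E | qq x ≤ (zs j).1 ∧ ∀ i, ℓ i x ≤ (zs j).2 i} := by
    intro j
    have : {x : E | qq x ≤ (zs j).1 ∧ ∀ i, ℓ i x ≤ (zs j).2 i}
        = {x | qq x ≤ (zs j).1} ∩ ⋂ i, {x | ℓ i x ≤ (zs j).2 i} := by
      ext x; simp [Set.mem_iInter]
    rw [this]
    exact (isClosed_le hqc continuous_const).inter (isClosed_iInter fun i =>
      isClosed_le (ℓ i).continuous_of_finiteDimensional continuous_const)
  have hSne : ∀ j : ℕ, {x : E | qq x ≤ (zs j).1 ∧ ∀ i, ℓ i x ≤ (zs j).2 i}.Nonempty := by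
    intro j; obtain ⟨x, hx1, hx2⟩ := hmem j; exact ⟨x, hx1, hx2⟩
  choose xs hxsmem hxmin using fun j => exists_min_norm (hSclosed j) (hSne j)
  have hxq : ∀ j, qq (xs j) ≤ (zs j).1 := fun j => (hxsmem j).1
  have hxl : ∀ j i, ℓ i (xs j) ≤ (zs j).2 i := fun j => (hxsmem j).2
  have hv : Tendsto (fun j => (zs j).1) atTop (𝓝 z.1) :=
    (continuous_fst.tendsto z).comp htend
  have hw : ∀ i, Tendsto (fun j => (zs j).2 i) atTop (𝓝 (z.2 i)) := fun i =>
    (((continuous_apply i).comp continuous_snd).tendsto z).comp htend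
  by_cases hbdd : ∃ R, ∃ᶠ j in atTop, ‖xs j‖ ≤ R
  · obtain ⟨R, hR⟩ := hbdd
    obtain ⟨φ, hφmono, hφ⟩ := Filter.extraction_of_frequently_atTop hR
    have hball : ∀ j, xs (φ j) ∈ Metric.closedBall (0:E) R := fun j => by
      simpa [dist_eq_norm] using hφ j
    obtain ⟨xb, -, ψ, hψmono, hψtend⟩ :=
      tendsto_subseq_of_bounded Metric.isBounded_closedBall hball
    have hmono2 : StrictMono (φ ∘ ψ) := hφmono.comp hψmono
    have hxtend : Tendsto (fun j => xs (φ (ψ j))) atTop (𝓝 xb) := hψtend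
    refine ⟨xb, ?_, fun i => ?_⟩
    · exact le_of_tendsto_of_tendsto' ((hqc.tendsto _).comp hxtend)
        (hv.comp hmono2.tendsto_atTop) (fun j => hxq _)
    · exact le_of_tendsto_of_tendsto'
        (((ℓ i).continuous_of_finiteDimensional.tendsto _).comp hxtend)
        ((hw i).comp hmono2.tendsto_atTop) (fun j => hxl _ i)
  · have hbdd' : ∀ R : ℝ, ∀ᶠ j in atTop, R < ‖xs j‖ := by
      intro R
      have := (Filter.not_frequently.mp (not_exists.mp hbdd R))
      exact this.mono fun j h => not_le.mp h
    have hT : Tendsto (fun j => ‖xs j‖) atTop atTop :=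
      tendsto_atTop.2 fun R => ((hbdd' R).mono fun j h => le_of_lt h)
    set N : ℕ → ℝ := fun j => ‖xs j‖ with hN
    set ds : ℕ → E := fun j => (N j)⁻¹ • xs j with hds
    have hdsnorm : ∀ j, N j ≠ 0 → ‖ds j‖ = 1 := by
      intro j h
      simp only [hds, hN, norm_smul, Real.norm_eq_abs, abs_inv, abs_norm]
      rw [abs_of_nonneg (norm_nonneg _)]
      exact inv_mul_cancel₀ (by simpa [hN] using h)
    have hball : ∀ j, ds j ∈ Metric.closedBall (0:E) 1 := by
      intro j
      rcases eq_or_ne (N j) 0 with h | h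
      · simp [hds, h]
      · simp [Metric.mem_closedBall, dist_zero_right, hdsnorm j h]
    obtain ⟨d, -, φ, hφmono, hdtend⟩ :=
      tendsto_subseq_of_bounded Metric.isBounded_closedBall hball
    have hdt : Tendsto (fun j => ds (φ j)) atTop (𝓝 d) := hdtend
    have hMtop : Tendsto (fun j => N (φ j)) atTop atTop := hT.comp hφmono.tendsto_atTop
    have hMpos : ∀ᶠ j in atTop, 1 ≤ N (φ j) := hMtop.eventually_ge_atTop 1
    have hMinv : Tendsto (fun j => (N (φ j))⁻¹) atTop (𝓝 0) := tendsto_inv_atTop_zero.comp hMtop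
    have hd1 : ‖d‖ = 1 := by
      have h1 : Tendsto (fun j => ‖ds (φ j)‖) atTop (𝓝 ‖d‖) :=
        (continuous_norm.tendsto d).comp hdt
      have heq : (fun j => ‖ds (φ j)‖) =ᶠ[atTop] (fun _ => (1:ℝ)) := by
        refine hMpos.mono fun j hj => hdsnorm _ (by positivity)
      rw [Filter.tendsto_congr' heq] at h1
      exact tendsto_nhds_unique h1 tendsto_const_nhds
    have hvφ : Tendsto (fun j => (zs (φ j)).1) atTop (𝓝 z.1) := hv.comp hφmono.tendsto_atTop
    have hπtend : Tendsto (fun j => π (ds (φ j))) atTop (𝓝 (π d)) :=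
      (π.continuous_of_finiteDimensional.tendsto d).comp hdt
    -- π d ≤ 0
    have hπd : π d ≤ 0 := by
      have hub : ∀ᶠ j in atTop, π (ds (φ j)) ≤ (N (φ j))⁻¹ * (zs (φ j)).1 := by
        filter_upwards [hMpos] with j hj
        have hpos : (0:ℝ) < N (φ j) := lt_of_lt_of_le one_pos hj
        have h1 : π (xs (φ j)) ≤ (zs (φ j)).1 := by
          have h2 := hxq (φ j)
          simp only [hqq] at h2
          linarith [hpsd (xs (φ j))]
        have : π (ds (φ j)) = (N (φ j))⁻¹ * π (xs (φ j)) := by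
          simp [hds, map_smul, smul_eq_mul]
        rw [this]
        exact mul_le_mul_of_nonneg_left h1 (by positivity)
      have hrhs : Tendsto (fun j => (N (φ j))⁻¹ * (zs (φ j)).1) atTop (𝓝 0) := by
        simpa using hMinv.mul hvφ
      exact le_of_tendsto_of_tendsto hπtend hrhs hub
    -- ℓ i d ≤ 0
    have hℓd : ∀ i, ℓ i d ≤ 0 := by
      intro i
      have hℓtend : Tendsto (fun j => ℓ i (ds (φ j))) atTop (𝓝 (ℓ i d)) :=
        ((ℓ i).continuous_of_finiteDimensional.tendsto d).comp hdt
      have hub : ∀ᶠ j in atTop, ℓ i (ds (φ j)) ≤ (N (φ j))⁻¹ * (zs (φ j)).2 i := by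
        filter_upwards [hMpos] with j hj
        have hpos : (0:ℝ) < N (φ j) := lt_of_lt_of_le one_pos hj
        have : ℓ i (ds (φ j)) = (N (φ j))⁻¹ * ℓ i (xs (φ j)) := by
          simp [hds, map_smul, smul_eq_mul]
        rw [this]
        exact mul_le_mul_of_nonneg_left (hxl (φ j) i) (by positivity)
      have hrhs : Tendsto (fun j => (N (φ j))⁻¹ * (zs (φ j)).2 i) atTop (𝓝 0) := by
        simpa using hMinv.mul ((hw i).comp hφmono.tendsto_atTop)
      exact le_of_tendsto_of_tendsto hℓtend hrhs hub
    -- Q d = 0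
    have hQd : Q d = 0 := by
      apply psd_kernel Q hsym hpsd
      have hQtend : Tendsto (fun j => (1/2 : ℝ) * ⟪ds (φ j), Q (ds (φ j))⟫) atTop
          (𝓝 ((1/2) * ⟪d, Q d⟫)) := by
        exact (tendsto_const_nhds.mul
          (((continuous_id.inner Q.continuous_of_finiteDimensional).tendsto d).comp hdt))
      have hub : ∀ᶠ j in atTop, (1/2 : ℝ) * ⟪ds (φ j), Q (ds (φ j))⟫ ≤
          (N (φ j))⁻¹ * ((N (φ j))⁻¹ * (zs (φ j)).1) - (N (φ j))⁻¹ * π (ds (φ j)) := by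
        filter_upwards [hMpos] with j hj
        have hpos : (0:ℝ) < N (φ j) := lt_of_lt_of_le one_pos hj
        have h2 := hxq (φ j)
        simp only [hqq] at h2
        have hinner : ⟪ds (φ j), Q (ds (φ j))⟫
            = (N (φ j))⁻¹ * ((N (φ j))⁻¹ * ⟪xs (φ j), Q (xs (φ j))⟫) := by
          simp [hds, map_smul, real_inner_smul_left, real_inner_smul_right]
        have hπs : π (ds (φ j)) = (N (φ j))⁻¹ * π (xs (φ j)) := by
          simp [hds, map_smul, smul_eq_mul]
        rw [hinner, hπs]
        have hinv : (0:ℝ) ≤ (N (φ j))⁻¹ := by positivity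
        nlinarith [mul_le_mul_of_nonneg_left (mul_le_mul_of_nonneg_left h2 hinv) hinv]
      have hrhs : Tendsto (fun j => (N (φ j))⁻¹ * ((N (φ j))⁻¹ * (zs (φ j)).1)
          - (N (φ j))⁻¹ * π (ds (φ j))) atTop (𝓝 0) := by
        simpa using (hMinv.mul (hMinv.mul hvφ)).sub (hMinv.mul hπtend)
      have := le_of_tendsto_of_tendsto hQtend hrhs hub
      linarith
    -- shift identity
    have hdQx : ∀ x : E, ⟪d, Q x⟫ = 0 := by
      intro x; rw [← hsym]; simp [hQd]
    have hshift : ∀ (x : E) (c : ℝ), qq (x + c • d) = qq x + c * π d := by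
      intro x c
      simp only [hqq, map_add, map_smul, hQd, smul_zero, add_zero, inner_add_left,
        inner_add_right, real_inner_smul_left, real_inner_smul_right, hdQx,
        smul_eq_mul]
      ring
    by_cases hπneg : π d < 0
    · -- get x₀ satisfying all linear constraints at the limit
      have hx₀ : ∃ x₀ : E, ∀ i, ℓ i x₀ ≤ z.2 i := by
        rcases Nat.eq_zero_or_pos k with rfl | hkpos
        · exact ⟨0, fun i => i.elim0⟩
        · obtain ⟨k', rfl⟩ := Nat.exists_eq_succ_of_ne_zero (Nat.pos_iff_ne_zero.mp hkpos)
          have hcl := IH k' (Nat.lt_succ_self k') 0 (by simp) (by simp)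
            (ℓ 0) (fun i => ℓ i.succ)
          have hmem'' : ∀ j, (((zs j).2 0, fun i : Fin k' => (zs j).2 i.succ) :
              ℝ × (Fin k' → ℝ)) ∈ {z' : ℝ × (Fin k' → ℝ) |
              ∃ x, (1/2) * ⟪x, (0 : E →ₗ[ℝ] E) x⟫ + ℓ 0 x ≤ z'.1 ∧
                ∀ i, ℓ i.succ x ≤ z'.2 i} := by
            intro j
            refine ⟨xs j, ?_, fun i => hxl j i.succ⟩
            simpa using hxl j 0
          have htend'' : Tendsto (fun j => (((zs j).2 0, fun i : Fin k' => (zs j).2 i.succ) :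
              ℝ × (Fin k' → ℝ))) atTop (𝓝 (z.2 0, fun i : Fin k' => z.2 i.succ)) :=
            (hw 0).prodMk_nhds (tendsto_pi_nhds.2 fun i => hw i.succ)
          have hlim := hcl.mem_of_tendsto htend'' (Filter.Eventually.of_forall hmem'')
          obtain ⟨x₀, h₀, hsucc⟩ := hlim
          refine ⟨x₀, fun i => ?_⟩
          refine Fin.cases ?_ (fun i' => hsucc i') i
          simpa using h₀
      obtain ⟨x₀, hx₀l⟩ := hx₀
      set τ := max 0 ((z.1 - qq x₀) / π d) with hτ
      have hτ0 : 0 ≤ τ := le_max_left _ _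
      refine ⟨x₀ + τ • d, ?_, fun i => ?_⟩
      · show qq (x₀ + τ • d) ≤ z.1
        rw [hshift]
        have h1 : (z.1 - qq x₀) / π d ≤ τ := le_max_right _ _
        have h2 : τ * π d ≤ ((z.1 - qq x₀) / π d) * π d :=
          mul_le_mul_of_nonpos_right h1 (le_of_lt hπneg)
        rw [div_mul_cancel₀ _ (ne_of_lt hπneg)] at h2
        linarith
      · have : ℓ i (x₀ + τ • d) = ℓ i x₀ + τ * ℓ i d := by
          simp [map_add, map_smul, smul_eq_mul]
        rw [this]
        have := mul_nonpos_of_nonneg_of_nonpos hτ0 (hℓd i)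
        linarith [hx₀l i]
    · have hπ0 : π d = 0 := le_antisymm hπd (not_lt.mp hπneg)
      by_cases hstr : ∃ i₀, ℓ i₀ d < 0
      · obtain ⟨i₀, hi₀⟩ := hstr
        obtain ⟨k', rfl⟩ := Nat.exists_eq_succ_of_ne_zero (Nat.pos_iff_ne_zero.mp i₀.pos)
        have hcl := IH k' (Nat.lt_succ_self k') Q hsym hpsd π (fun i => ℓ (i₀.succAbove i))
        have hmem'' : ∀ j, (((zs j).1, fun i : Fin k' => (zs j).2 (i₀.succAbove i)) :
            ℝ × (Fin k' → ℝ)) ∈ {z' : ℝ × (Fin k' → ℝ) |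
            ∃ x, (1/2) * ⟪x, Q x⟫ + π x ≤ z'.1 ∧
              ∀ i, ℓ (i₀.succAbove i) x ≤ z'.2 i} := by
          intro j
          exact ⟨xs j, hxq j, fun i => hxl j (i₀.succAbove i)⟩
        have htend'' : Tendsto (fun j => (((zs j).1,
            fun i : Fin k' => (zs j).2 (i₀.succAbove i)) : ℝ × (Fin k' → ℝ)))
            atTop (𝓝 (z.1, fun i : Fin k' => z.2 (i₀.succAbove i))) :=
          hv.prodMk_nhds (tendsto_pi_nhds.2 fun i => hw (i₀.succAbove i))
        have hlim := hcl.mem_of_tendsto htend'' (Filter.Eventually.of_forall hmem'')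
        obtain ⟨x', hq', hrows'⟩ := hlim
        set τ := max 0 ((z.2 i₀ - ℓ i₀ x') / ℓ i₀ d) with hτ
        have hτ0 : 0 ≤ τ := le_max_left _ _
        refine ⟨x' + τ • d, ?_, fun i => ?_⟩
        · show qq (x' + τ • d) ≤ z.1
          rw [hshift, hπ0, mul_zero, add_zero]
          exact hq'
        · have hval : ℓ i (x' + τ • d) = ℓ i x' + τ * ℓ i d := by
            simp [map_add, map_smul, smul_eq_mul]
          rcases eq_or_ne i i₀ with rfl | hne
          · rw [hval]
            have h1 : (z.2 i - ℓ i x') / ℓ i d ≤ τ := le_max_right _ _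
            have h2 : τ * ℓ i d ≤ ((z.2 i - ℓ i x') / ℓ i d) * ℓ i d :=
              mul_le_mul_of_nonpos_right h1 (le_of_lt hi₀)
            rw [div_mul_cancel₀ _ (ne_of_lt hi₀)] at h2
            linarith
          · obtain ⟨i', hi'⟩ := Fin.exists_succAbove_eq hne
            rw [hval]
            have := mul_nonpos_of_nonneg_of_nonpos hτ0 (hℓd i)
            have h3 : ℓ (i₀.succAbove i') x' ≤ z.2 (i₀.succAbove i') := hrows' i'
            rw [hi'] at h3
            linarith
      · exfalso
        push_neg at hstr
        have hℓ0 : ∀ i, ℓ i d = 0 := fun i => le_antisymm (hℓd i) (hstr i)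
        have hip : Tendsto (fun j => ⟪ds (φ j), d⟫) atTop (𝓝 (1:ℝ)) := by
          have h1 : Tendsto (fun j => ⟪ds (φ j), d⟫) atTop (𝓝 ⟪d, d⟫) :=
            ((continuous_id.inner continuous_const).tendsto d).comp hdt
          have : ⟪d, d⟫ = (1:ℝ) := by
            rw [real_inner_self_eq_norm_sq, hd1]; norm_num
          rwa [this] at h1
        have hev : ∀ᶠ j in atTop, 1/2 ≤ ⟪ds (φ j), d⟫ :=
          hip.eventually (eventually_ge_nhds (by norm_num))
        obtain ⟨j, hj1, hj2⟩ := (hMpos.and hev).exists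
        have hpos : (0:ℝ) < N (φ j) := lt_of_lt_of_le one_pos hj1
        set c := ⟪xs (φ j), d⟫ with hc
        have hcval : ⟪ds (φ j), d⟫ = (N (φ j))⁻¹ * c := by
          simp [hds, real_inner_smul_left, hc]
        have hcpos : 0 < c := by
          have : (1:ℝ)/2 ≤ (N (φ j))⁻¹ * c := by rw [← hcval]; exact hj2
          nlinarith [inv_pos.mpr hpos]
        set y' := xs (φ j) - c • d with hy'
        have hmem' : y' ∈ {x : E | qq x ≤ (zs (φ j)).1 ∧ ∀ i, ℓ i x ≤ (zs (φ j)).2 i} := by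
          constructor
          · have : y' = xs (φ j) + (-c) • d := by rw [hy']; module
            rw [this, hshift, hπ0]
            simpa using hxq (φ j)
          · intro i
            have : ℓ i y' = ℓ i (xs (φ j)) - c * ℓ i d := by
              simp [hy', map_sub, map_smul, smul_eq_mul]
            rw [this, hℓ0 i]
            simpa using hxl (φ j) i
        have hlt : ‖y'‖^2 = ‖xs (φ j)‖^2 - c^2 := by
          rw [hy', norm_sub_sq_real, real_inner_smul_right, ← hc, norm_smul,
            Real.norm_eq_abs]
          rw [mul_pow, sq_abs, hd1]
          ring
        have hge := hxmin (φ j) y' hmem'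
        have : ‖xs (φ j)‖^2 ≤ ‖y'‖^2 := pow_le_pow_left₀ (norm_nonneg _) hge 2
        nlinarith


set_option maxHeartbeats 1000000 in
/-- Theorem 6(1): in the QP setting, the merit-function infimum is attained
for every `t`. -/
theorem stmt_16
    (n m : ℕ)
    (Q : EuclideanSpace ℝ (Fin n) →ₗ[ℝ] EuclideanSpace ℝ (Fin n))
    (hQsymm : ∀ x y : EuclideanSpace ℝ (Fin n), (inner ℝ (Q x) y : ℝ) = inner ℝ x (Q y))
    (hQpsd : ∀ x : EuclideanSpace ℝ (Fin n), 0 ≤ (inner ℝ x (Q x) : ℝ))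
    (p : EuclideanSpace ℝ (Fin n))
    (q : EuclideanSpace ℝ (Fin n) → ℝ)
    (hq : ∀ x, q x = (1/2) * (inner ℝ x (Q x) : ℝ) + (inner ℝ p x : ℝ))
    (C : Set (EuclideanSpace ℝ (Fin m)))
    (hC : C = {s : EuclideanSpace ℝ (Fin m) | ∀ i, 0 ≤ s i})
    (A : EuclideanSpace ℝ (Fin n) →ₗ[ℝ] EuclideanSpace ℝ (Fin m))
    (b : EuclideanSpace ℝ (Fin m))
    (r₀ : EuclideanSpace ℝ (Fin n) → EuclideanSpace ℝ (Fin m) → ℝ)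
    (hr₀ : ∀ x s, r₀ x s =
      (1/2) * ‖A x + s - b‖^2 + (1/2) * (Metric.infDist s C)^2)
    (r : EuclideanSpace ℝ (Fin n) → EuclideanSpace ℝ (Fin m) → ℝ → ℝ)
    (hr : ∀ x s t, r x s t = (1/2) * (max (q x - t) 0)^2 + r₀ x s)
    (rstar : ℝ → ℝ)
    (hrstar : ∀ t, rstar t =
      ⨅ z : EuclideanSpace ℝ (Fin n) × EuclideanSpace ℝ (Fin m), r z.1 z.2 t) :
    ∀ t : ℝ, ∃ (xbar : EuclideanSpace ℝ (Fin n)) (sbar : EuclideanSpace ℝ (Fin m)),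
      ∀ (x : EuclideanSpace ℝ (Fin n)) (s : EuclideanSpace ℝ (Fin m)),
        r xbar sbar t ≤ r x s t := by
  intro t
  classical
  -- clean formula for r
  have hrform : ∀ x s, r x s t = (1/2)*(max (q x - t) 0)^2
      + ∑ i, ((1/2)*(A x i + s i - b i)^2 + (1/2)*(max (-(s i)) 0)^2) := by
    intro x s
    rw [hr, hr₀, hC, infDist_orthant, norm_sq_euclid]
    have hcoord : ∀ i, (A x + s - b) i = A x i + s i - b i := fun i => rfl
    simp only [hcoord]
    rw [Finset.mul_sum, Finset.mul_sum, ← Finset.sum_add_distrib]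
  -- the function Φ
  set Φ : ℝ × (Fin m → ℝ) → ℝ := fun z =>
    (1/2)*(max (z.1 - t) 0)^2 + ∑ i, (1/4)*(max (z.2 i - b i) 0)^2 with hΦ
  have hΦc : Continuous Φ := by
    apply Continuous.add
    · exact continuous_const.mul
        (((continuous_fst.sub continuous_const).max continuous_const).pow 2)
    · exact continuous_finset_sum _ fun i _ => continuous_const.mul
        (((((continuous_apply i).comp continuous_snd).sub continuous_const).max
          continuous_const).pow 2)
  -- lower bound : Φ (q x, A x) ≤ r x s t
  have hKL : ∀ x s, Φ (q x, fun i => A x i) ≤ r x s t := by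
    intro x s
    rw [hrform, hΦ]
    apply add_le_add le_rfl
    apply Finset.sum_le_sum
    intro i _
    have := oneDim_lower (A x i - b i) (s i)
    calc (1/4)*(max (A x i - b i) 0)^2
        ≤ (1/2)*((A x i - b i) + s i)^2 + (1/2)*(max (-(s i)) 0)^2 := this
      _ = (1/2)*(A x i + s i - b i)^2 + (1/2)*(max (-(s i)) 0)^2 := by ring_nf
  -- monotonicity of Φ
  have hsqmax : ∀ a a' c : ℝ, a ≤ a' → (max (a - c) 0)^2 ≤ (max (a' - c) 0)^2 := by
    intro a a' c h
    have h1 : max (a - c) 0 ≤ max (a' - c) 0 := max_le_max (by linarith) le_rfl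
    exact pow_le_pow_left₀ (le_max_right _ _) h1 2
  have hKM : ∀ z z' : ℝ × (Fin m → ℝ), z.1 ≤ z'.1 → (∀ i, z.2 i ≤ z'.2 i) →
      Φ z ≤ Φ z' := by
    intro z z' h1 h2
    rw [hΦ]
    apply add_le_add
    · have := hsqmax z.1 z'.1 t h1
      linarith
    · apply Finset.sum_le_sum
      intro i _
      have := hsqmax (z.2 i) (z'.2 i) (b i) (h2 i)
      linarith
  -- the set S and its closedness
  set π : EuclideanSpace ℝ (Fin n) →ₗ[ℝ] ℝ := innerₛₗ ℝ p with hπ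
  set ℓ : Fin m → EuclideanSpace ℝ (Fin n) →ₗ[ℝ] ℝ :=
    fun i => (LinearMap.proj i : (Fin m → ℝ) →ₗ[ℝ] ℝ).comp ((WithLp.linearEquiv 2 ℝ (Fin m → ℝ)).toLinearMap.comp A) with hℓ
  set S : Set (ℝ × (Fin m → ℝ)) := {z | ∃ x, q x ≤ z.1 ∧ ∀ i, A x i ≤ z.2 i} with hS
  have hSclosed : IsClosed S := by
    have h := cl_closed n m Q hQsymm hQpsd π ℓ
    have heq : {z : ℝ × (Fin m → ℝ) |
        ∃ x, (1/2) * ⟪x, Q x⟫ + π x ≤ z.1 ∧ ∀ i, ℓ i x ≤ z.2 i} = S := by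
      ext z
      constructor
      · rintro ⟨x, h1, h2⟩; exact ⟨x, by rw [hq]; exact h1, h2⟩
      · rintro ⟨x, h1, h2⟩; exact ⟨x, by rw [hq] at h1; exact h1, h2⟩
    rwa [heq] at h
  have hSup : ∀ z z' : ℝ × (Fin m → ℝ), z ∈ S → z.1 ≤ z'.1 → (∀ i, z.2 i ≤ z'.2 i) →
      z' ∈ S := by
    rintro z z' ⟨x, h1, h2⟩ ha hb
    exact ⟨x, le_trans h1 ha, fun i => le_trans (h2 i) (hb i)⟩
  -- compact minimization
  set z₀ : ℝ × (Fin m → ℝ) := (max (q 0) t, fun i => max (A 0 i) (b i)) with hz₀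
  have hz₀S : z₀ ∈ S := ⟨0, le_max_left _ _, fun i => le_max_left _ _⟩
  obtain ⟨B, hB⟩ : ∃ B : ℝ, B = Φ z₀ := ⟨_, rfl⟩
  set K := {z : ℝ × (Fin m → ℝ) | z ∈ S ∧ (t ≤ z.1 ∧ ∀ i, b i ≤ z.2 i) ∧ Φ z ≤ B}
    with hK
  have hz₀K : z₀ ∈ K := ⟨hz₀S, ⟨le_max_right _ _, fun i => le_max_right _ _⟩, le_of_eq hB.symm⟩
  have hBnn : (0:ℝ) ≤ B := by
    rw [hB, hΦ]; positivity
  have hKclosed : IsClosed K := by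
    have hKeq : K = (S ∩ ({z : ℝ × (Fin m → ℝ) | t ≤ z.1} ∩
        ⋂ i, {z : ℝ × (Fin m → ℝ) | b i ≤ z.2 i})) ∩ {z | Φ z ≤ B} := by
      ext z
      simp only [hK, Set.mem_inter_iff, Set.mem_iInter, Set.mem_setOf_eq]
      tauto
    rw [hKeq]
    exact ((hSclosed.inter ((isClosed_le continuous_const continuous_fst).inter
      (isClosed_iInter fun i => isClosed_le continuous_const
        ((continuous_apply i).comp continuous_snd)))).inter
      (isClosed_le hΦc continuous_const))
  have hKsub : K ⊆ (Set.Icc t (t + Real.sqrt (2*B))) ×ˢ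
      (Set.univ.pi fun i => Set.Icc (b i) (b i + Real.sqrt (4*B))) := by
    rintro z ⟨hzS, ⟨hz1, hz2⟩, hzB⟩
    have hsum_nonneg : (0:ℝ) ≤ ∑ i, (1/4)*(max (z.2 i - b i) 0)^2 := by positivity
    have hfirst : (1/2)*(z.1 - t)^2 ≤ B := by
      have : max (z.1 - t) 0 = z.1 - t := max_eq_left (by linarith)
      have hΦz : Φ z = (1/2)*(max (z.1 - t) 0)^2 + ∑ i, (1/4)*(max (z.2 i - b i) 0)^2 := rfl
      rw [hΦz, this] at hzB
      linarith
    constructor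
    · constructor
      · exact hz1
      · have h2B : (z.1 - t)^2 ≤ 2*B := by linarith
        have h3 : z.1 - t ≤ Real.sqrt (2*B) :=
          (Real.le_sqrt (by linarith) (by linarith)).mpr h2B
        linarith
    · intro i _
      have hterm : (1/4)*(z.2 i - b i)^2 ≤ B := by
        have hmax : max (z.2 i - b i) 0 = z.2 i - b i := max_eq_left (by linarith [hz2 i])
        have h1 : (1/4)*(max (z.2 i - b i) 0)^2 ≤ ∑ j, (1/4)*(max (z.2 j - b j) 0)^2 :=
          Finset.single_le_sum (f := fun j => (1/4)*(max (z.2 j - b j) 0)^2)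
            (fun j _ => by positivity) (Finset.mem_univ i)
        have hΦz : Φ z = (1/2)*(max (z.1 - t) 0)^2 + ∑ j, (1/4)*(max (z.2 j - b j) 0)^2 := rfl
        rw [hmax] at h1
        have hsq : (0:ℝ) ≤ (1/2)*(max (z.1 - t) 0)^2 := by positivity
        rw [hΦz] at hzB
        linarith
      constructor
      · exact hz2 i
      · have h4B : (z.2 i - b i)^2 ≤ 4*B := by linarith
        have h3 : z.2 i - b i ≤ Real.sqrt (4*B) :=
          (Real.le_sqrt (by linarith [hz2 i]) (by linarith)).mpr h4B
        linarith
  have hKcompact : IsCompact K := by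
    refine IsCompact.of_isClosed_subset ?_ hKclosed hKsub
    exact (isCompact_Icc).prod (isCompact_univ_pi fun i => isCompact_Icc)
  obtain ⟨zb, hzbK, hzbmin⟩ := hKcompact.exists_isMinOn ⟨z₀, hz₀K⟩ (hΦc.continuousOn)
  -- zb minimizes Φ over all of S
  have hmin : ∀ z ∈ S, Φ zb ≤ Φ z := by
    intro z hz
    have hz'S : ((max z.1 t, fun i => max (z.2 i) (b i)) : ℝ × (Fin m → ℝ)) ∈ S :=
      hSup z _ hz (le_max_left _ _) (fun i => le_max_left _ _)
    have hΦeq : Φ ((max z.1 t, fun i => max (z.2 i) (b i)) : ℝ × (Fin m → ℝ)) = Φ z := by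
      simp only [hΦ]
      congr 1
      · have : max (max z.1 t - t) 0 = max (z.1 - t) 0 := by
          rcases le_total z.1 t with h | h
          · rw [max_eq_right h, max_eq_right (by linarith), max_eq_right (by linarith)]
          · rw [max_eq_left h]
        rw [this]
      · apply Finset.sum_congr rfl
        intro i _
        have : max (max (z.2 i) (b i) - b i) 0 = max (z.2 i - b i) 0 := by
          rcases le_total (z.2 i) (b i) with h | h
          · rw [max_eq_right h, max_eq_right (by linarith), max_eq_right (by linarith)]
          · rw [max_eq_left h]
        rw [this]
    by_cases hb : Φ ((max z.1 t, fun i => max (z.2 i) (b i)) : ℝ × (Fin m → ℝ)) ≤ B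
    · have hz'K : ((max z.1 t, fun i => max (z.2 i) (b i)) : ℝ × (Fin m → ℝ)) ∈ K :=
        ⟨hz'S, ⟨le_max_right _ _, fun i => le_max_right _ _⟩, hb⟩
      have := hzbmin hz'K
      simp only [Set.mem_setOf_eq] at this
      rw [hΦeq] at this
      exact this
    · push_neg at hb
      have h1 : Φ zb ≤ B := hzbK.2.2
      rw [← hΦeq]
      linarith
  -- extract the witness
  obtain ⟨xb, hxb1, hxb2⟩ := hzbK.1
  set sb : EuclideanSpace ℝ (Fin m) :=
    WithLp.toLp 2 (fun i => -(A xb i - b i) + max (A xb i - b i) 0 / 2) with hsb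
  refine ⟨xb, sb, fun x s => ?_⟩
  have hKE : r xb sb t = Φ (q xb, fun i => A xb i) := by
    rw [hrform, hΦ]
    congr 1
    apply Finset.sum_congr rfl
    intro i _
    have hsbi : sb i = -(A xb i - b i) + max (A xb i - b i) 0 / 2 := rfl
    rw [hsbi]
    have := oneDim_eq (A xb i - b i)
    calc (1/2)*(A xb i + (-(A xb i - b i) + max (A xb i - b i) 0 / 2) - b i)^2
          + (1/2)*(max (-(-(A xb i - b i) + max (A xb i - b i) 0 / 2)) 0)^2
        = (1/2)*((A xb i - b i) + (-(A xb i - b i) + max (A xb i - b i) 0 / 2))^2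
          + (1/2)*(max (-(-(A xb i - b i) + max (A xb i - b i) 0 / 2)) 0)^2 := by
          ring_nf
      _ = (1/4)*(max (A xb i - b i) 0)^2 := this
  calc r xb sb t = Φ (q xb, fun i => A xb i) := hKE
    _ ≤ Φ zb := hKM _ _ hxb1 hxb2
    _ ≤ Φ (q x, fun i => A x i) := hmin _ ⟨x, le_rfl, fun i => le_rfl⟩
    _ ≤ r x s t := hKL x s
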